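/- Let G be a discrete group with identity e, let ω be a weight on G, and suppose N ∈ l∞(G)' witnesses ω-amenability of G (⟨N, (Ω(g,g⁻¹))_g⟩ = 1 and J_h'(N) = N for all h). Define ψ : l∞(G×G) → l∞(G) by ⟨ψ(F), δ_g⟩ = F(g, g⁻¹), and let M = ψ'(N). Then ⟨M, (f_{gh} Ω(g,h))_{(g,h)}⟩ = f_e for every bounded family (f_g)_{g∈G}. -/

import Mathlib

open NormedSpace

noncomputable section

instance factOneLeTop : Fact ((1 : ENNReal) ≤ ⊤) := ⟨le_top⟩

/-- Let `G` be a discrete group with weight `ω`, `Ω (g,h) = ω (g h)/(ω g ω h)`, and let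
`N ∈ l∞(G)'` witness `ω`-amenability: `⟨N, (Ω (g,g⁻¹))_g⟩ = 1` (hypothesis `hN1`) and
`J_h'(N) = N` for all `h` (hypothesis `hN2`, where
`J_h(f)_g = f_{h g} Ω (h,g) ω h Ω (g⁻¹,h⁻¹) ω h⁻¹`).  With `ψ : l∞(G×G) → l∞(G)`,
`ψ(F)_g = F (g, g⁻¹)`, and `M = ψ'(N)`, we have
`⟨M, (f_{g h} Ω (g,h))_{(g,h)}⟩ = f_1` for every bounded family `(f_g)`; here the element
`(ψ ((f_{g h} Ω (g,h))_{(g,h)}))_g = f (g g⁻¹) Ω (g,g⁻¹)` is the `Fψ` below. -/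
theorem stmt16 {G : Type*} [Group G] (ω : G → ℝ)
    (hpos : ∀ g, 0 < ω g) (hsub : ∀ g h, ω (g * h) ≤ ω g * ω h) (hone : ω 1 = 1)
    (N : StrongDual ℂ (lp (fun _ : G => ℂ) ⊤))
    (hN1 : ∀ F : lp (fun _ : G => ℂ) ⊤,
      (∀ g : G, F g = ((ω (g * g⁻¹) / (ω g * ω g⁻¹) : ℝ) : ℂ)) → N F = 1)
    (hN2 : ∀ h : G, ∀ F F' : lp (fun _ : G => ℂ) ⊤,
      (∀ g : G, F' g = F (h * g) *
        ((ω (h * g) / (ω h * ω g) * ω h * (ω (g⁻¹ * h⁻¹) / (ω g⁻¹ * ω h⁻¹)) * ω h⁻¹ : ℝ) : ℂ)) →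
      N F' = N F) :
    ∀ f : G → ℂ, (∃ C : ℝ, ∀ g, ‖f g‖ ≤ C) →
      ∀ Fψ : lp (fun _ : G => ℂ) ⊤,
        (∀ g : G, Fψ g = f (g * g⁻¹) * ((ω (g * g⁻¹) / (ω g * ω g⁻¹) : ℝ) : ℂ)) →
        N Fψ = f 1 := by
  intro f _ Fψ hFψ
  have hmem : Memℓp (fun g : G => ((ω (g * g⁻¹) / (ω g * ω g⁻¹) : ℝ) : ℂ)) ⊤ := by
    apply memℓp_infty
    refine ⟨1, ?_⟩
    rintro x ⟨g, rfl⟩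
    simp only [Complex.norm_real, Real.norm_eq_abs]
    rw [abs_of_nonneg (div_nonneg (hpos _).le (mul_nonneg (hpos _).le (hpos _).le))]
    rw [div_le_one (mul_pos (hpos g) (hpos g⁻¹))]
    calc ω (g * g⁻¹) = 1 := by rw [mul_inv_cancel]; exact hone
    _ ≤ ω g * ω g⁻¹ := by
        have := hsub g g⁻¹; rw [mul_inv_cancel, hone] at this; exact this
  set F₀ : lp (fun _ : G => ℂ) ⊤ := ⟨_, hmem⟩ with hF₀
  have hN0 : N F₀ = 1 := hN1 F₀ (fun g => rfl)
  have heq : Fψ = f 1 • F₀ := by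
    apply lp.ext
    funext g
    have hF0g : F₀ g = ((ω (g * g⁻¹) / (ω g * ω g⁻¹) : ℝ) : ℂ) := rfl
    have : Fψ g = f 1 * F₀ g := by
      rw [hFψ g, hF0g, mul_inv_cancel]
    simpa using this
  rw [heq, map_smul, hN0, smul_eq_mul, mul_one]
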